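/- Let D be a triangulated category with an admissible G-action, |G| invertible in D, such that D^G carries the canonical triangulated structure. If (D^{≤0}, D^{≥0}) is a t-structure on D with D^{≤0} invariant under all F_g, then ((D^{≤0})^G, (D^{≥0})^G) is a t-structure on D^G. Moreover it is nondegenerate (resp. bounded, resp. stable) whenever the original t-structure is. -/

import Mathlib

open CategoryTheory Limits
universe v u
variable {G : Type*} [Group G] {A : Type u} [Category.{v} A]

structure GAction (G : Type*) [Group G] (A : Type u) [Category.{v} A] where
  F : G → A ⥤ A
  equiv : ∀ g, (F g).IsEquivalence
  δ : ∀ g h : G, F h ⋙ F g ≅ F (h * g)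
  cocycle : ∀ (g h l : G) (X : A),
    (F g).map ((δ h l).hom.app X) ≫ (δ g (l * h)).hom.app X ≫
      eqToHom (congrArg (fun m => (F m).obj X) (mul_assoc l h g)) =
    (δ g h).hom.app ((F l).obj X) ≫ (δ (h * g) l).hom.app X

structure EqObj (act : GAction G A) where
  obj : A
  lam : ∀ g : G, (act.F g).obj obj ≅ obj
  compat : ∀ g h : G,
    (act.F g).map (lam h).hom ≫ (lam g).hom =
      (act.δ g h).hom.app obj ≫ (lam (h * g)).hom

namespace EqObj

variable {act : GAction G A}

@[ext]
structure EqHom (X Y : EqObj act) where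
  f : X.obj ⟶ Y.obj
  comm : ∀ g : G, (act.F g).map f ≫ (Y.lam g).hom = (X.lam g).hom ≫ f

instance : Category (EqObj act) where
  Hom := EqHom
  id X := ⟨𝟙 X.obj, by intro g; simp⟩
  comp {X Y Z} u v := ⟨u.f ≫ v.f, by
    intro g
    rw [Functor.map_comp, Category.assoc, v.comm, ← Category.assoc, u.comm, Category.assoc]⟩

@[ext]
lemma hom_ext {X Y : EqObj act} {u v : X ⟶ Y} (h : u.f = v.f) : u = v := EqHom.ext h

@[simp] lemma id_f (X : EqObj act) : (𝟙 X : X ⟶ X).f = 𝟙 X.obj := rfl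
@[simp] lemma comp_f {X Y Z : EqObj act} (u : X ⟶ Y) (v : Y ⟶ Z) :
    (u ≫ v).f = u.f ≫ v.f := rfl

@[simps]
def forget (act : GAction G A) : EqObj act ⥤ A where
  obj X := X.obj
  map u := u.f

section Preadditive

variable [Preadditive A] [∀ g : G, (act.F g).Additive]

instance instAddHom (X Y : EqObj act) : Add (X ⟶ Y) :=
  ⟨fun u v => ⟨u.f + v.f, fun g => by
    simp [Preadditive.add_comp, Preadditive.comp_add, u.comm g, v.comm g]⟩⟩

instance instZeroHom (X Y : EqObj act) : Zero (X ⟶ Y) :=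
  ⟨⟨0, fun g => by simp⟩⟩

instance instNegHom (X Y : EqObj act) : Neg (X ⟶ Y) :=
  ⟨fun u => ⟨-u.f, fun g => by
    simp [Preadditive.neg_comp, Preadditive.comp_neg, u.comm g]⟩⟩

instance homAddCommGroup (X Y : EqObj act) : AddCommGroup (X ⟶ Y) where
  add := (· + ·)
  zero := 0
  neg := Neg.neg
  add_assoc := fun a b c => hom_ext (add_assoc a.f b.f c.f)
  zero_add := fun a => hom_ext (zero_add a.f)
  add_zero := fun a => hom_ext (add_zero a.f)
  nsmul := nsmulRec
  zsmul := zsmulRec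
  neg_add_cancel := fun a => hom_ext (neg_add_cancel a.f)
  add_comm := fun a b => hom_ext (add_comm a.f b.f)

instance : Preadditive (EqObj act) where
  homGroup := homAddCommGroup
  add_comp _ _ _ f f' g := hom_ext (Preadditive.add_comp _ _ _ f.f f'.f g.f)
  comp_add _ _ _ f g g' := hom_ext (Preadditive.comp_add _ _ _ f.f g.f g'.f)

@[simp] lemma add_f {X Y : EqObj act} (u v : X ⟶ Y) : (u + v).f = u.f + v.f := rfl
@[simp] lemma zero_f (X Y : EqObj act) : (0 : X ⟶ Y).f = 0 := rfl

instance : (forget act).Additive where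
  map_add := rfl

end Preadditive

end EqObj

/-- A functor is *separable* if the induced transformation on hom-sets admits a natural
retraction. -/
def CategoryTheory.Functor.Separable {C : Type*} [Category C] {B : Type*} [Category B]
    (F : C ⥤ B) : Prop :=
  ∃ Φ : ∀ X Y : C, (F.obj X ⟶ F.obj Y) → (X ⟶ Y),
    (∀ (X Y : C) (f : X ⟶ Y), Φ X Y (F.map f) = f) ∧
    (∀ (X' X Y Y' : C) (u : X' ⟶ X) (v : Y ⟶ Y') (h : F.obj X ⟶ F.obj Y),
      Φ X' Y' (F.map u ≫ h ≫ F.map v) = u ≫ Φ X Y h ≫ v)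

/-- `n` is invertible in an additive category `A` if every morphism is uniquely divisible
by `n`. -/
def NatInvertibleIn (n : ℕ) (A : Type u) [Category.{v} A] [Preadditive A] : Prop :=
  ∀ ⦃X Y : A⦄ (f : X ⟶ Y), ∃! g : X ⟶ Y, n • g = f

/-- A functor `A ⥤ A^G` *is the induction functor* if its composite with the forgetful
functor is naturally isomorphic to `X ↦ ⊕_{g ∈ G} F_g(X)`. -/
def IsInduction [Preadditive A] [HasFiniteBiproducts A] [Fintype G] (act : GAction G A)
    (Ind : A ⥤ EqObj act) : Prop :=
  ∃ iso : ∀ X : A, (EqObj.forget act).obj (Ind.obj X) ≅ ⨁ (fun g : G => (act.F g).obj X),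
    ∀ (X Y : A) (f : X ⟶ Y),
      (EqObj.forget act).map (Ind.map f) ≫ (iso Y).hom =
        (iso X).hom ≫ biproduct.map (fun g => (act.F g).map f)

/-- `Ξ` is the unit of the action `act`. -/
def IsActionUnit (act : GAction G A) (Ξ : act.F (1 : G) ≅ 𝟭 A) : Prop :=
  (∀ X : A, (act.F (1 : G)).map (Ξ.hom.app X) =
      (act.δ (1 : G) (1 : G)).hom.app X ≫
        eqToHom (congrArg (fun m => (act.F m).obj X) (one_mul (1 : G)))) ∧
  (∀ X : A, Ξ.hom.app ((act.F (1 : G)).obj X) =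
      (act.δ (1 : G) (1 : G)).hom.app X ≫
        eqToHom (congrArg (fun m => (act.F m).obj X) (one_mul (1 : G))))

/-- A `G`-equivariant structure on a functor `F` between two categories with
`G`-actions. -/
structure EquivStructure {B : Type*} [Category B]
    (actA : GAction G A) (actB : GAction G B) (F : A ⥤ B) where
  φ : ∀ g : G, actA.F g ⋙ F ≅ F ⋙ actB.F g
  square : ∀ (g h : G) (X : A),
    (φ g).hom.app ((actA.F h).obj X) ≫ (actB.F g).map ((φ h).hom.app X) ≫
        (actB.δ g h).hom.app (F.obj X) =
      F.map ((actA.δ g h).hom.app X) ≫ (φ (h * g)).hom.app X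
  triangle : ∀ (Ξ : actA.F (1 : G) ≅ 𝟭 A) (Υ : actB.F (1 : G) ≅ 𝟭 B),
    IsActionUnit actA Ξ → IsActionUnit actB Υ →
    ∀ X : A, (φ (1 : G)).hom.app X ≫ Υ.hom.app (F.obj X) = F.map (Ξ.hom.app X)

section Triangulated

open ZeroObject

variable {D : Type u} [Category.{v} D] [Preadditive D] [HasZeroObject D]
  [HasShift D ℤ] [∀ n : ℤ, (shiftFunctor D n).Additive] [Pretriangulated D]
variable (act : GAction G D) [∀ g : G, (act.F g).Additive]

/-- The zero object of `A^G`. -/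
noncomputable def EqObj.zeroEq : EqObj act where
  obj := 0
  lam g := (act.F g).mapZeroObject
  compat g h := (isZero_zero D).eq_of_tgt _ _

lemma EqObj.isZero_zeroEq : IsZero (EqObj.zeroEq act) := by
  rw [IsZero.iff_id_eq_zero]
  apply EqObj.hom_ext
  exact (isZero_zero D).eq_of_tgt _ _

instance : HasZeroObject (EqObj act) := ⟨⟨EqObj.zeroEq act, EqObj.isZero_zeroEq act⟩⟩

open Pretriangulated

/-- The action `act` is admissible: each `F_g` is exact (commutes with the shift and
preserves distinguished triangles), and the commuting isomorphisms make the shift functor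
`[1]` a `G`-equivariant functor. -/
structure AdmissibleOn [∀ g : G, (act.F g).CommShift ℤ] : Prop where
  exact : ∀ (g : G), ∀ T ∈ distTriang D, (act.F g).mapTriangle.obj T ∈ distTriang D
  shift_equivariant : ∃ e : EquivStructure act act (shiftFunctor D (1 : ℤ)),
    ∀ g : G, e.φ g = ((act.F g).commShiftIso (1 : ℤ)).symm

end Triangulated

section TStr

open Pretriangulated Triangulated

variable {C : Type*} [Category C] [Preadditive C] [HasZeroObject C] [HasShift C ℤ]
  [∀ n : ℤ, (shiftFunctor C n).Additive] [Pretriangulated C]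

/-- A t-structure is nondegenerate if `⋂ₙ C^{≤n} = 0 = ⋂ₙ C^{≥n}`. -/
def CategoryTheory.Triangulated.TStructure.Nondegenerate (t : TStructure C) : Prop :=
  (∀ X : C, (∀ n : ℤ, t.le n X) → IsZero X) ∧
  (∀ X : C, (∀ n : ℤ, t.ge n X) → IsZero X)

/-- A t-structure is bounded if every object lies in some `C^{[m,n]}`. -/
def CategoryTheory.Triangulated.TStructure.Bounded (t : TStructure C) : Prop :=
  ∀ X : C, ∃ m n : ℤ, t.ge m X ∧ t.le n X

/-- A t-structure is stable if `C^{≤0}` is a triangulated subcategory, i.e. closed under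
the inverse shift. -/
def CategoryTheory.Triangulated.TStructure.Stable (t : TStructure C) : Prop :=
  ∀ X : C, t.le 0 X → t.le 0 (X⟦(-1 : ℤ)⟧)

end TStr

section AuxLemmas

open Pretriangulated Triangulated

variable {C : Type*} [Category C] [Preadditive C] [HasZeroObject C] [HasShift C ℤ]
  [∀ n : ℤ, (shiftFunctor C n).Additive] [Pretriangulated C]

/-- Unique lifting along the first map of a truncation-like triangle. -/
lemma aux_uniqueLift (t : TStructure C) {T : Triangle C} (hT : T ∈ distTriang C)
    (h1 : t.le 0 T.obj₁) (h3 : t.ge 1 T.obj₃) {W : C} (hW : t.le 0 W)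
    (w : W ⟶ T.obj₂) : ∃! l : W ⟶ T.obj₁, l ≫ T.mor₁ = w := by
  obtain ⟨l, hl⟩ := Triangle.coyoneda_exact₂ T hT w (t.zero' _ hW h3)
  refine ⟨l, hl.symm, fun y hy => ?_⟩
  have hd : (y - l) ≫ T.mor₁ = 0 := by
    rw [Preadditive.sub_comp, hy, ← hl, sub_self]
  obtain ⟨q, hq⟩ := Triangle.coyoneda_exact₂ _ (inv_rot_of_distTriang _ hT) (y - l)
    (by exact hd)
  have hq0 : q = 0 := t.zero' q hW
    (t.ge_antitone (by omega : (1:ℤ) ≤ 2) _ (t.ge_shift 1 (-1) 2 (by omega) T.obj₃ h3))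
  rw [hq0, zero_comp] at hq
  exact sub_eq_zero.1 hq

/-- An object right-orthogonal to `C^{≤0}` lies in `C^{≥1}`. -/
lemma aux_geOfOrthogonal (t : TStructure C) (Z : C)
    (hZ : ∀ (W : C), t.le 0 W → ∀ w : W ⟶ Z, w = 0) : t.ge 1 Z := by
  obtain ⟨X, Y, hX, hY, f, g, h, hT⟩ := t.exists_triangle_zero_one Z
  have hf : f = 0 := hZ X hX f
  have hrot := rot_of_distTriang _ hT
  have hzero : IsZero ((Triangle.mk f g h).rotate.obj₃) := by
    rw [IsZero.iff_id_eq_zero]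
    obtain ⟨s, hs⟩ := Triangle.coyoneda_exact₃ _ hrot (𝟙 _)
      (by show 𝟙 (X⟦(1:ℤ)⟧) ≫ (-(shiftFunctor C (1:ℤ)).map f) = 0; rw [hf, Functor.map_zero, neg_zero, comp_zero])
    have hle : t.le 0 (X⟦(1:ℤ)⟧) :=
      t.le_monotone (by omega : (-1:ℤ) ≤ 0) _ (t.le_shift 0 1 (-1) (by omega) X hX)
    have hs0 : s = 0 := t.zero' s hle hY
    rw [hs, hs0, zero_comp]
  haveI : IsIso g := ((Triangle.mk f g h).rotate.isZero₃_iff_isIso₁ hrot).1 hzero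
  exact (t.ge 1).prop_of_iso (asIso g).symm hY

/-- Each `F g` preserves `D^{≥1}`, provided every `F g` preserves `D^{≤0}`. -/
lemma aux_geMap {D : Type u} [Category.{v} D] [Preadditive D] [HasZeroObject D]
    [HasShift D ℤ] [∀ n : ℤ, (shiftFunctor D n).Additive] [Pretriangulated D]
    (act : GAction G D) [∀ g : G, (act.F g).Additive] (t : TStructure D)
    (hinv : ∀ (g : G) (X : D), t.le 0 X → t.le 0 ((act.F g).obj X))
    (g : G) (Z : D) (hZ : t.ge 1 Z) : t.ge 1 ((act.F g).obj Z) := by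
  haveI := act.equiv (1 : G)
  haveI := act.equiv g⁻¹
  have ρ : (act.F (1 : G)).obj Z ≅ Z :=
    (act.F (1 : G)).preimageIso ((act.δ (1:G) (1:G)).app Z ≪≫
      eqToIso (congrArg (fun m => (act.F m).obj Z) (one_mul (1 : G))))
  refine aux_geOfOrthogonal t _ (fun W hW w => ?_)
  have e : (act.F g⁻¹).obj ((act.F g).obj Z) ≅ Z :=
    (act.δ g⁻¹ g).app Z ≪≫
      eqToIso (congrArg (fun m => (act.F m).obj Z) (mul_inv_cancel g)) ≪≫ ρ
  have h0 : (act.F g⁻¹).map w ≫ e.hom = 0 := t.zero' _ (hinv g⁻¹ W hW) hZ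
  have h1 : (act.F g⁻¹).map w = 0 := by
    calc (act.F g⁻¹).map w = ((act.F g⁻¹).map w ≫ e.hom) ≫ e.inv := by simp
      _ = 0 := by rw [h0, zero_comp]
  exact (act.F g⁻¹).map_injective (by rw [h1, Functor.map_zero])

/-- An equivariant object is zero as soon as its underlying object is. -/
lemma aux_isZeroEq [Preadditive A] {act : GAction G A} [∀ g : G, (act.F g).Additive]
    {X : EqObj act} (h : IsZero X.obj) : IsZero X := by
  rw [IsZero.iff_id_eq_zero]
  apply EqObj.hom_ext
  simpa using h.eq_of_src (𝟙 X.obj) 0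

end AuxLemmas

open Pretriangulated Triangulated in
/-- Let `D` satisfy the running hypothesis: an admissible `G`-action with `|G|`
invertible, such that `D^G` carries the canonical triangulated structure.  If
`(D^{≤0}, D^{≥0})` is a `G`-invariant t-structure on `D`, then the preimages under `ω`
form a t-structure on `D^G`, which is nondegenerate (resp. bounded, resp. stable)
whenever the original one is. -/
theorem equivariant_tstructure
    {D : Type u} [Category.{v} D] [Preadditive D] [HasZeroObject D]
    [HasShift D ℤ] [∀ n : ℤ, (shiftFunctor D n).Additive] [Pretriangulated D]
    [Fintype G] (act : GAction G D) [∀ g : G, (act.F g).Additive]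
    [∀ g : G, (act.F g).CommShift ℤ]
    (hadm : AdmissibleOn act)
    (hG : NatInvertibleIn (Fintype.card G) D)
    -- the canonical triangulated structure on `D^G`
    [HasShift (EqObj act) ℤ] [∀ n : ℤ, (shiftFunctor (EqObj act) n).Additive]
    [(EqObj.forget act).CommShift ℤ] [Pretriangulated (EqObj act)]
    (hdist : ∀ T : Triangle (EqObj act),
      (T ∈ distTriang (EqObj act)) ↔ ((EqObj.forget act).mapTriangle.obj T ∈ distTriang D))
    (t : TStructure D)
    (hinv : ∀ (g : G) (X : D), t.le 0 X → t.le 0 ((act.F g).obj X)) :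
    ∃ tG : TStructure (EqObj act),
      (∀ (n : ℤ) (X : EqObj act), tG.le n X ↔ t.le n X.obj) ∧
      (∀ (n : ℤ) (X : EqObj act), tG.ge n X ↔ t.ge n X.obj) ∧
      (t.Nondegenerate → tG.Nondegenerate) ∧
      (t.Bounded → tG.Bounded) ∧
      (t.Stable → tG.Stable) := by
  obtain ⟨hexact, -⟩ := hadm
  refine ⟨{
    le := fun n X => t.le n X.obj
    ge := fun n X => t.ge n X.obj
    le_isClosedUnderIsomorphisms := fun n =>
      ⟨fun e hX => (t.le n).prop_of_iso ((EqObj.forget act).mapIso e) hX⟩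
    ge_isClosedUnderIsomorphisms := fun n =>
      ⟨fun e hX => (t.ge n).prop_of_iso ((EqObj.forget act).mapIso e) hX⟩
    le_shift := fun n a n' hh X hX =>
      (t.le n').prop_of_iso (((EqObj.forget act).commShiftIso a).app X).symm
        (t.le_shift n a n' hh X.obj hX)
    ge_shift := fun n a n' hh X hX =>
      (t.ge n').prop_of_iso (((EqObj.forget act).commShiftIso a).app X).symm
        (t.ge_shift n a n' hh X.obj hX)
    zero' := fun X Y f hX hY => EqObj.hom_ext (by simpa using t.zero' f.f hX hY)
    le_zero_le := fun X hX => t.le_zero_le _ hX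
    ge_one_le := fun X hX => t.ge_one_le _ hX
    exists_triangle_zero_one := ?_ },
    fun n X => Iff.rfl, fun n X => Iff.rfl, ?_, ?_, ?_⟩
  · -- existence of truncation triangles in `D^G`
    intro A
    obtain ⟨X, Y, hX, hY, f₀, g₀, h₀, hT⟩ := t.exists_triangle_zero_one A.obj
    have lift : ∀ (W : D), t.le 0 W → ∀ w : W ⟶ A.obj, ∃! l : W ⟶ X, l ≫ f₀ = w :=
      fun W hW w => aux_uniqueLift t hT hX hY hW w
    have liftg : ∀ (k : G) (W : D), t.le 0 W → ∀ w : W ⟶ A.obj,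
        ∃! l : W ⟶ (act.F k).obj X, l ≫ ((act.F k).map f₀ ≫ (A.lam k).hom) = w := by
      intro k W hW w
      have hTk : Triangle.mk ((act.F k).map f₀ ≫ (A.lam k).hom)
          ((A.lam k).inv ≫ (act.F k).map g₀)
          ((act.F k).map h₀ ≫ ((act.F k).commShiftIso (1 : ℤ)).hom.app X) ∈ distTriang D := by
        refine Pretriangulated.isomorphic_distinguished _ (hexact k _ hT) _ ?_
        exact Pretriangulated.Triangle.isoMk _ _ (Iso.refl _) (A.lam k).symm (Iso.refl _)
          (by show ((act.F k).map f₀ ≫ (A.lam k).hom) ≫ (A.lam k).inv = 𝟙 _ ≫ (act.F k).map f₀; simp)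
          (by show ((A.lam k).inv ≫ (act.F k).map g₀) ≫ 𝟙 _ = (A.lam k).inv ≫ (act.F k).map g₀; simp)
          (by show ((act.F k).map h₀ ≫ ((act.F k).commShiftIso (1 : ℤ)).hom.app X) ≫ (shiftFunctor D (1 : ℤ)).map (𝟙 ((act.F k).obj X)) = 𝟙 _ ≫ ((act.F k).map h₀ ≫ ((act.F k).commShiftIso (1 : ℤ)).hom.app X); simp)
      exact aux_uniqueLift t hTk (hinv k X hX) (aux_geMap act t hinv k Y hY) hW w
    choose a ha hau using fun k : G =>
      lift ((act.F k).obj X) (hinv k X hX) ((act.F k).map f₀ ≫ (A.lam k).hom)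
    choose b hb hbu using fun k : G => liftg k X hX f₀
    have hba : ∀ k, b k ≫ a k = 𝟙 X := fun k =>
      (lift X hX f₀).unique (by rw [Category.assoc, ha k]; exact hb k) (by simp)
    have hab : ∀ k, a k ≫ b k = 𝟙 ((act.F k).obj X) := fun k =>
      (liftg k ((act.F k).obj X) (hinv k X hX) ((act.F k).map f₀ ≫ (A.lam k).hom)).unique
        (by rw [Category.assoc, hb k]; exact ha k) (by simp)
    have compat : ∀ g k : G, (act.F g).map (a k) ≫ a g =
        (act.δ g k).hom.app X ≫ a (k * g) := by
      intro g k
      have h1 : ((act.F g).map (a k) ≫ a g) ≫ f₀ =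
          (act.F g).map ((act.F k).map f₀) ≫ ((act.F g).map (A.lam k).hom ≫ (A.lam g).hom) := by
        rw [Category.assoc, ha g, ← Category.assoc, ← Functor.map_comp,
          ha k, Functor.map_comp, Category.assoc]
      have h2 : ((act.δ g k).hom.app X ≫ a (k * g)) ≫ f₀ =
          (act.F g).map ((act.F k).map f₀) ≫ ((act.F g).map (A.lam k).hom ≫ (A.lam g).hom) := by
        rw [Category.assoc, ha (k * g), ← Category.assoc,
          ← (act.δ g k).hom.naturality f₀, Category.assoc, ← A.compat g k]
        rfl
      exact (lift _ (hinv g _ (hinv k X hX)) _).unique h1 h2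
    let XG : EqObj act :=
      { obj := X
        lam := fun k => ⟨a k, b k, hab k, hba k⟩
        compat := compat }
    let fG : XG ⟶ A := ⟨f₀, fun k => (ha k).symm⟩
    obtain ⟨Z, gZ, hZmor, hTG⟩ := Pretriangulated.distinguished_cocone_triangle fG
    have hforget : (EqObj.forget act).mapTriangle.obj (Triangle.mk fG gZ hZmor) ∈ distTriang D :=
      (hdist _).1 hTG
    obtain ⟨c, hc₁, hc₂⟩ := Pretriangulated.complete_distinguished_triangle_morphism
      (Triangle.mk f₀ g₀ h₀) _ hT hforget (𝟙 X) (𝟙 A.obj) (by show f₀ ≫ 𝟙 A.obj = 𝟙 X ≫ f₀; simp [fG])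
    have hcIso : IsIso c := by
      refine Pretriangulated.isIso₃_of_isIso₁₂
        ({ hom₁ := 𝟙 X, hom₂ := 𝟙 A.obj, hom₃ := c,
           comm₁ := by show f₀ ≫ 𝟙 A.obj = 𝟙 X ≫ f₀; simp [fG], comm₂ := by simpa using hc₁,
           comm₃ := by simpa using hc₂ } :
          Triangle.mk f₀ g₀ h₀ ⟶ (EqObj.forget act).mapTriangle.obj (Triangle.mk fG gZ hZmor))
        hT hforget ?_ ?_
      · dsimp; exact (inferInstance : IsIso (𝟙 X))
      · dsimp; exact (inferInstance : IsIso (𝟙 A.obj))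
    have hZobj : t.ge 1 Z.obj := (t.ge 1).prop_of_iso (@asIso _ _ _ _ c hcIso) hY
    exact ⟨XG, Z, hX, hZobj, fG, gZ, hZmor, hTG⟩
  · -- nondegenerate
    rintro ⟨h₁, h₂⟩
    exact ⟨fun X hX => aux_isZeroEq (h₁ X.obj (fun n => hX n)),
           fun X hX => aux_isZeroEq (h₂ X.obj (fun n => hX n))⟩
  · -- bounded
    intro hb X
    obtain ⟨m, n, hm, hn⟩ := hb X.obj
    exact ⟨m, n, hm, hn⟩
  · -- stable
    intro hs X hX
    exact (t.le 0).prop_of_iso (((EqObj.forget act).commShiftIso (-1 : ℤ)).app X).symm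
      (hs X.obj hX)
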